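/- arXiv:1203.6001 — 5 statements merged into one kernel-verified Lean document; each statement's English description precedes it below -/
import Mathlib

section
/- Let A ∈ ℂ^{m×n_a} have unit ℓ2-norm columns a_1,…,a_{n_a} with coherence at most μ_a, let B ∈ ℂ^{m×n_b} have columns b_1,…,b_{n_b} with |⟨a_i, b_j⟩| ≤ μ_m for all i, j. Let X ⊆ {1,…,n_a} with |X| = n_x, E ⊆ {1,…,n_b} with |E| = n_e, set D_{X,E} = [A_X B_E], and suppose there exists λ > 0 with ‖D_{X,E} v‖₂ ≥ λ·‖v‖₂ for all v. If √(μ_a²·n_x + μ_m²·n_e) < λ, then for every γ ∉ X the column a_γ does not lie in the column space of D_{X,E}. -/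
open scoped Matrix

noncomputable def e2norm {ι : Type*} [Fintype ι] (v : ι → ℂ) : ℝ :=
  Real.sqrt (∑ i, ‖v i‖ ^ 2)

def subCols {m n : ℕ} (M : Matrix (Fin m) (Fin n) ℂ) (S : Finset (Fin n)) :
    Matrix (Fin m) ↥S ℂ := M.submatrix id (fun j => (j : Fin n))

lemma e2norm_eq {ι : Type*} [Fintype ι] (v : ι → ℂ) :
    e2norm v = ‖(WithLp.equiv 2 (ι → ℂ)).symm v‖ := by
  rw [EuclideanSpace.norm_eq]
  simp [e2norm]

lemma cs {ι : Type*} [Fintype ι] (w v : ι → ℂ) :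
    ‖∑ j, (starRingEnd ℂ) (w j) * v j‖ ≤ e2norm w * e2norm v := by
  have h := norm_inner_le_norm (𝕜 := ℂ) ((WithLp.equiv 2 (ι → ℂ)).symm w)
      ((WithLp.equiv 2 (ι → ℂ)).symm v)
  rw [PiLp.inner_apply] at h
  simpa [RCLike.inner_apply, e2norm_eq, mul_comm] using h

/-- under the coherence bounds and the lower singular-value bound
`‖D_{X,E} v‖₂ ≥ λ ‖v‖₂`, if `√(μa² n_x + μm² n_e) < λ`, then for every `γ ∉ X` the column
`a_γ` does not lie in the column space of `D_{X,E} = [A_X B_E]`. -/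
theorem stmt10 {m na nb : ℕ} (A : Matrix (Fin m) (Fin na) ℂ) (B : Matrix (Fin m) (Fin nb) ℂ)
    (μa μm : ℝ)
    (hunit : ∀ j, ∑ i, ‖A i j‖ ^ 2 = 1)
    (hcohA : ∀ i j, i ≠ j → ‖∑ k, (starRingEnd ℂ) (A k i) * A k j‖ ≤ μa)
    (hmut : ∀ i j, ‖∑ k, (starRingEnd ℂ) (A k i) * B k j‖ ≤ μm)
    (X : Finset (Fin na)) (E : Finset (Fin nb)) (nx ne : ℕ)
    (hX : X.card = nx) (hE : E.card = ne)
    (l : ℝ) (hl : 0 < l)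
    (hD : ∀ v : ↥X ⊕ ↥E → ℂ,
      l * e2norm v ≤ e2norm ((Matrix.fromCols (subCols A X) (subCols B E)).mulVec v))
    (hlt : Real.sqrt (μa ^ 2 * nx + μm ^ 2 * ne) < l)
    (γ : Fin na) (hγ : γ ∉ X) :
    ¬ ∃ v : ↥X ⊕ ↥E → ℂ,
        (Matrix.fromCols (subCols A X) (subCols B E)).mulVec v = (fun i => A i γ) := by
  rintro ⟨v, hv⟩
  set D := Matrix.fromCols (subCols A X) (subCols B E) with hDdef
  have hc1 : e2norm (fun i => A i γ) = 1 := by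
    simp [e2norm, hunit γ]
  have hvle : l * e2norm v ≤ 1 := by
    have := hD v
    rwa [hv, hc1] at this
  set w : ↥X ⊕ ↥E → ℂ := fun j => ∑ k, (starRingEnd ℂ) (D k j) * A k γ with hw
  have hμaj : ∀ j : ↥X, ‖w (Sum.inl j)‖ ≤ μa := by
    intro j
    have hne : (j : Fin na) ≠ γ := fun h => hγ (h ▸ j.2)
    simpa [hw, hDdef, Matrix.fromCols, subCols] using hcohA j γ hne
  have hμmj : ∀ j : ↥E, ‖w (Sum.inr j)‖ ≤ μm := by
    intro j
    have : w (Sum.inr j) = (starRingEnd ℂ) (∑ k, (starRingEnd ℂ) (A k γ) * B k j) := by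
      simp [hw, hDdef, Matrix.fromCols, subCols, map_sum, mul_comm]
    rw [this, Complex.norm_conj]
    exact hmut γ j
  -- the inner product ⟨w, v⟩ equals 1
  have hinner : ∑ j, (starRingEnd ℂ) (w j) * v j = 1 := by
    have h1 : ∑ j, (starRingEnd ℂ) (w j) * v j
        = ∑ k, (starRingEnd ℂ) (A k γ) * D.mulVec v k := by
      simp only [hw, Matrix.mulVec, dotProduct, map_sum, map_mul, Complex.conj_conj,
        Finset.sum_mul, Finset.mul_sum]
      rw [Finset.sum_comm]
      exact Finset.sum_congr rfl fun k _ => Finset.sum_congr rfl fun j _ => by ring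
    rw [h1, hv]
    have h2 : ∀ k : Fin m, (starRingEnd ℂ) (A k γ) * A k γ
        = ((‖A k γ‖ ^ 2 : ℝ) : ℂ) := by
      intro k
      rw [mul_comm, Complex.mul_conj, Complex.normSq_eq_norm_sq]
    simp only [h2]
    rw [← Complex.ofReal_sum, hunit γ, Complex.ofReal_one]
  -- bound on the norm of w
  have hS0 : (0:ℝ) ≤ μa ^ 2 * nx + μm ^ 2 * ne := by positivity
  have hwbound : e2norm w ≤ Real.sqrt (μa ^ 2 * nx + μm ^ 2 * ne) := by
    apply Real.sqrt_le_sqrt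
    rw [Fintype.sum_sum_type]
    have hb1 : ∑ j : ↥X, ‖w (Sum.inl j)‖ ^ 2 ≤ (nx : ℝ) * μa ^ 2 := by
      calc ∑ j : ↥X, ‖w (Sum.inl j)‖ ^ 2
          ≤ ∑ _j : ↥X, μa ^ 2 :=
            Finset.sum_le_sum fun j _ =>
              pow_le_pow_left₀ (norm_nonneg _) (hμaj j) 2
        _ = (nx : ℝ) * μa ^ 2 := by
            simp [Finset.sum_const, Fintype.card_coe, hX]
    have hb2 : ∑ j : ↥E, ‖w (Sum.inr j)‖ ^ 2 ≤ (ne : ℝ) * μm ^ 2 := by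
      calc ∑ j : ↥E, ‖w (Sum.inr j)‖ ^ 2
          ≤ ∑ _j : ↥E, μm ^ 2 :=
            Finset.sum_le_sum fun j _ =>
              pow_le_pow_left₀ (norm_nonneg _) (hμmj j) 2
        _ = (ne : ℝ) * μm ^ 2 := by
            simp [Finset.sum_const, Fintype.card_coe, hE]
    linarith
  have hcs := cs w v
  rw [hinner] at hcs
  simp only [norm_one] at hcs
  have hwn : 0 ≤ e2norm v := Real.sqrt_nonneg _
  have hsq : 0 ≤ Real.sqrt (μa ^ 2 * nx + μm ^ 2 * ne) := Real.sqrt_nonneg _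
  nlinarith [mul_le_mul_of_nonneg_right hwbound hwn]
end

section
/- Let A ∈ ℂ^{m×n_a} have unit ℓ2-norm columns a_1,…,a_{n_a} with |⟨a_i, b_j⟩| ≤ μ_m for all i, j, and let B ∈ ℂ^{m×n_b} have unit ℓ2-norm columns b_1,…,b_{n_b} with coherence at most μ_b. Let X ⊆ {1,…,n_a} with |X| = n_x, E ⊆ {1,…,n_b} with |E| = n_e, set D_{X,E} = [A_X B_E], and suppose there exists λ > 0 with ‖D_{X,E} v‖₂ ≥ λ·‖v‖₂ for all v. If √(μ_m²·n_x + μ_b²·n_e) < λ, then for every γ ∉ E the column b_γ does not lie in the column space of D_{X,E}. -/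
open scoped Matrix

/-- under the coherence bounds and the lower singular-value bound
`‖D_{X,E} v‖₂ ≥ λ ‖v‖₂`, if `√(μm² n_x + μb² n_e) < λ`, then for every `γ ∉ E` the column
`b_γ` does not lie in the column space of `D_{X,E} = [A_X B_E]`. -/
theorem stmt11 {m na nb : ℕ} (A : Matrix (Fin m) (Fin na) ℂ) (B : Matrix (Fin m) (Fin nb) ℂ)
    (μb μm : ℝ)
    (hunitA : ∀ j, ∑ i, ‖A i j‖ ^ 2 = 1)
    (hunitB : ∀ j, ∑ i, ‖B i j‖ ^ 2 = 1)
    (hcohB : ∀ i j, i ≠ j → ‖∑ k, (starRingEnd ℂ) (B k i) * B k j‖ ≤ μb)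
    (hmut : ∀ i j, ‖∑ k, (starRingEnd ℂ) (A k i) * B k j‖ ≤ μm)
    (X : Finset (Fin na)) (E : Finset (Fin nb)) (nx ne : ℕ)
    (hX : X.card = nx) (hE : E.card = ne)
    (l : ℝ) (hl : 0 < l)
    (hD : ∀ v : ↥X ⊕ ↥E → ℂ,
      l * e2norm v ≤ e2norm ((Matrix.fromCols (subCols A X) (subCols B E)).mulVec v))
    (hlt : Real.sqrt (μm ^ 2 * nx + μb ^ 2 * ne) < l)
    (γ : Fin nb) (hγ : γ ∉ E) :
    ¬ ∃ v : ↥X ⊕ ↥E → ℂ,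
        (Matrix.fromCols (subCols A X) (subCols B E)).mulVec v = (fun i => B i γ) := by
  rintro ⟨v, hv⟩
  set D := Matrix.fromCols (subCols A X) (subCols B E) with hDdef
  set c : ↥X ⊕ ↥E → ℂ := fun i => ∑ k, (starRingEnd ℂ) (D k i) * B k γ with hc
  -- Step 1: the bilinear sum equals 1
  have key : ∑ i, (starRingEnd ℂ) (v i) * c i = 1 := by
    have h0 : ∑ i, (starRingEnd ℂ) (v i) * c i
        = ∑ k, (starRingEnd ℂ) (D.mulVec v k) * B k γ := by
      simp only [hc, Matrix.mulVec, dotProduct, map_sum, Finset.mul_sum,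
        Finset.sum_mul, map_mul]
      rw [Finset.sum_comm]
      congr 1; ext k; congr 1; ext i; ring
    rw [h0, hv]
    have h1 : ∑ k, (starRingEnd ℂ) (B k γ) * B k γ
        = ((∑ k, ‖B k γ‖ ^ 2 : ℝ) : ℂ) := by
      push_cast
      congr 1; ext k
      rw [← Complex.normSq_eq_conj_mul_self, Complex.normSq_eq_norm_sq]
      push_cast
      ring
    rw [h1, hunitB γ]; norm_num
  -- Step 3: bound on ∑ |c i|²
  have hcbound : ∑ i, ‖c i‖ ^ 2 ≤ μm ^ 2 * nx + μb ^ 2 * ne := by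
    rw [Fintype.sum_sum_type]
    have h1 : ∀ x : ↥X, ‖c (Sum.inl x)‖ ^ 2 ≤ μm ^ 2 := by
      intro x
      have hcx : c (Sum.inl x) = ∑ k, (starRingEnd ℂ) (A k (x : Fin na)) * B k γ := by
        simp [hc, hDdef, subCols, Matrix.fromCols]
      rw [hcx]
      exact pow_le_pow_left₀ (norm_nonneg _) (hmut _ _) 2
    have h2 : ∀ e : ↥E, ‖c (Sum.inr e)‖ ^ 2 ≤ μb ^ 2 := by
      intro e
      have hce : c (Sum.inr e) = ∑ k, (starRingEnd ℂ) (B k (e : Fin nb)) * B k γ := by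
        simp [hc, hDdef, subCols, Matrix.fromCols]
      rw [hce]
      have hne : (e : Fin nb) ≠ γ := fun h => hγ (h ▸ e.2)
      exact pow_le_pow_left₀ (norm_nonneg _) (hcohB _ _ hne) 2
    have s1 : ∑ x : ↥X, ‖c (Sum.inl x)‖ ^ 2 ≤ (nx : ℝ) * μm ^ 2 := by
      calc ∑ x : ↥X, ‖c (Sum.inl x)‖ ^ 2 ≤ ∑ _x : ↥X, μm ^ 2 :=
            Finset.sum_le_sum fun x _ => h1 x
        _ = (nx : ℝ) * μm ^ 2 := by
            rw [Finset.sum_const, Finset.card_univ, Fintype.card_coe, hX, nsmul_eq_mul]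
    have s2 : ∑ e : ↥E, ‖c (Sum.inr e)‖ ^ 2 ≤ (ne : ℝ) * μb ^ 2 := by
      calc ∑ e : ↥E, ‖c (Sum.inr e)‖ ^ 2 ≤ ∑ _e : ↥E, μb ^ 2 :=
            Finset.sum_le_sum fun e _ => h2 e
        _ = (ne : ℝ) * μb ^ 2 := by
            rw [Finset.sum_const, Finset.card_univ, Fintype.card_coe, hE, nsmul_eq_mul]
    linarith
  -- Step 2: Cauchy-Schwarz
  have habs : (1 : ℝ) ≤ e2norm v * Real.sqrt (∑ i, ‖c i‖ ^ 2) := by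
    have h1 : (1 : ℝ) = ‖∑ i, (starRingEnd ℂ) (v i) * c i‖ := by
      rw [key]; simp
    have h2 : ‖∑ i, (starRingEnd ℂ) (v i) * c i‖
        ≤ ∑ i, ‖v i‖ * ‖c i‖ := by
      refine (norm_sum_le _ _).trans_eq ?_
      refine Finset.sum_congr rfl fun i _ => ?_
      rw [norm_mul, Complex.norm_conj]
    have h3 : ∑ i, ‖v i‖ * ‖c i‖
        ≤ Real.sqrt (∑ i, ‖v i‖ ^ 2) *
          Real.sqrt (∑ i, ‖c i‖ ^ 2) := by
      have hcs := Finset.sum_mul_sq_le_sq_mul_sq Finset.univ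
        (fun i => ‖v i‖) (fun i => ‖c i‖)
      have hnn : (0 : ℝ) ≤ ∑ i, ‖v i‖ * ‖c i‖ :=
        Finset.sum_nonneg fun i _ =>
          mul_nonneg (norm_nonneg _) (norm_nonneg _)
      calc ∑ i, ‖v i‖ * ‖c i‖
          = Real.sqrt ((∑ i, ‖v i‖ * ‖c i‖) ^ 2) :=
            (Real.sqrt_sq hnn).symm
        _ ≤ Real.sqrt ((∑ i, ‖v i‖ ^ 2) * ∑ i, ‖c i‖ ^ 2) :=
            Real.sqrt_le_sqrt hcs
        _ = _ := Real.sqrt_mul (Finset.sum_nonneg fun i _ => sq_nonneg _) _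
    rw [e2norm]
    linarith
  -- Step 4: the norm of the image is 1
  have hDv1 : l * e2norm v ≤ 1 := by
    have h := hD v
    rw [hv] at h
    have : e2norm (fun i => B i γ) = 1 := by
      rw [e2norm, hunitB γ, Real.sqrt_one]
    rwa [this] at h
  -- Finish
  have h4 : Real.sqrt (∑ i, ‖c i‖ ^ 2) ≤ Real.sqrt (μm ^ 2 * nx + μb ^ 2 * ne) :=
    Real.sqrt_le_sqrt hcbound
  have hvnn : 0 ≤ e2norm v := Real.sqrt_nonneg _
  have hsnn : 0 ≤ Real.sqrt (∑ i, ‖c i‖ ^ 2) := Real.sqrt_nonneg _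
  nlinarith [mul_le_mul_of_nonneg_left h4 hvnn]
end

section
/- Let A ∈ ℂ^{m×n_a} and B ∈ ℂ^{m×n_b} both have unit ℓ2-norm columns, with coherences at most μ_a and μ_b respectively and mutual coherence at most μ_m. Let X ⊆ {1,…,n_a} with |X| = n_x, E ⊆ {1,…,n_b} with |E| = n_e, set D_{X,E} = [A_X B_E], and suppose there exists λ > 0 with ‖D_{X,E} v‖₂ ≥ λ·‖v‖₂ for all v. If max{ √(μ_a²·n_x + μ_m²·n_e), √(μ_m²·n_x + μ_b²·n_e) } < λ, then no column of A indexed outside X and no column of B indexed outside E lies in the column space of D_{X,E}. -/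
open scoped Matrix

lemma aux_main {m : ℕ} {ι : Type*} [Fintype ι] (D : Matrix (Fin m) ι ℂ) (a : Fin m → ℂ)
    (bound l : ℝ)
    (ha : ∑ i, ‖a i‖ ^ 2 = 1)
    (hc : ∑ i : ι, ‖∑ k, (starRingEnd ℂ) (a k) * D k i‖ ^ 2 ≤ bound)
    (hl : 0 < l) (hb : Real.sqrt bound < l)
    (hD : ∀ v, l * e2norm v ≤ e2norm (D.mulVec v)) :
    ¬ ∃ v : ι → ℂ, D.mulVec v = a := by
  rintro ⟨v, hv⟩
  set c : ι → ℂ := fun i => ∑ k, (starRingEnd ℂ) (a k) * D k i with hcdef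
  have hnorm1 : e2norm a = 1 := by
    simp [e2norm, ha]
  have hDv1 : l * e2norm v ≤ 1 := by
    have := hD v
    rwa [hv, hnorm1] at this
  -- inner product equals 1
  have hs : (∑ i : ι, v i * c i) = 1 := by
    have : (∑ i : ι, v i * c i) = ∑ k, (starRingEnd ℂ) (a k) * (D.mulVec v k) := by
      simp only [hcdef, Matrix.mulVec, dotProduct, Finset.mul_sum, Finset.sum_mul]
      rw [Finset.sum_comm]
      congr 1; ext i; congr 1; ext k; ring
    rw [this, hv]
    have : ∀ k, (starRingEnd ℂ) (a k) * a k = ((‖a k‖ ^ 2 : ℝ) : ℂ) := by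
      intro k
      rw [← Complex.normSq_eq_norm_sq, Complex.normSq_eq_conj_mul_self]
    simp_rw [this]
    rw [← Complex.ofReal_sum, ha, Complex.ofReal_one]
  -- Cauchy-Schwarz
  have hcs : (1 : ℝ) ≤ e2norm v * Real.sqrt bound := by
    have h1 : (1 : ℝ) = ‖∑ i : ι, v i * c i‖ := by rw [hs]; simp
    have h2 : ‖∑ i : ι, v i * c i‖ ≤ ∑ i : ι, ‖v i‖ * ‖c i‖ := by
      calc ‖∑ i : ι, v i * c i‖ ≤ ∑ i : ι, ‖v i * c i‖ :=
            norm_sum_le _ _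
        _ = ∑ i : ι, ‖v i‖ * ‖c i‖ := by simp [map_mul]
    have h3 : ∑ i : ι, ‖v i‖ * ‖c i‖ ≤
        Real.sqrt (∑ i : ι, ‖v i‖ ^ 2) * Real.sqrt (∑ i : ι, ‖c i‖ ^ 2) :=
      Real.sum_mul_le_sqrt_mul_sqrt _ _ _
    have h4 : Real.sqrt (∑ i : ι, ‖c i‖ ^ 2) ≤ Real.sqrt bound :=
      Real.sqrt_le_sqrt hc
    calc (1:ℝ) = ‖∑ i : ι, v i * c i‖ := h1
      _ ≤ ∑ i : ι, ‖v i‖ * ‖c i‖ := h2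
      _ ≤ Real.sqrt (∑ i : ι, ‖v i‖ ^ 2) * Real.sqrt (∑ i : ι, ‖c i‖ ^ 2) := h3
      _ ≤ e2norm v * Real.sqrt bound := by
          apply mul_le_mul_of_nonneg_left h4
          exact Real.sqrt_nonneg _
  have hvpos : 0 < e2norm v := by
    by_contra h
    push_neg at h
    have : e2norm v = 0 := le_antisymm h (Real.sqrt_nonneg _)
    rw [this] at hcs; norm_num at hcs
  have : (1:ℝ) < 1 := by
    calc (1:ℝ) ≤ e2norm v * Real.sqrt bound := hcs
      _ < e2norm v * l := by exact mul_lt_mul_of_pos_left hb hvpos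
      _ = l * e2norm v := mul_comm _ _
      _ ≤ 1 := hDv1
  exact absurd this (lt_irrefl 1)

/-- under the coherence bounds and the lower singular-value bound
`‖D_{X,E} v‖₂ ≥ λ ‖v‖₂`, if `max{√(μa² n_x + μm² n_e), √(μm² n_x + μb² n_e)} < λ`, then no
column of `A` indexed outside `X` and no column of `B` indexed outside `E` lies in the
column space of `D_{X,E} = [A_X B_E]`. -/
theorem stmt12 {m na nb : ℕ} (A : Matrix (Fin m) (Fin na) ℂ) (B : Matrix (Fin m) (Fin nb) ℂ)
    (μa μb μm : ℝ)
    (hunitA : ∀ j, ∑ i, ‖A i j‖ ^ 2 = 1)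
    (hunitB : ∀ j, ∑ i, ‖B i j‖ ^ 2 = 1)
    (hcohA : ∀ i j, i ≠ j → ‖∑ k, (starRingEnd ℂ) (A k i) * A k j‖ ≤ μa)
    (hcohB : ∀ i j, i ≠ j → ‖∑ k, (starRingEnd ℂ) (B k i) * B k j‖ ≤ μb)
    (hmut : ∀ i j, ‖∑ k, (starRingEnd ℂ) (A k i) * B k j‖ ≤ μm)
    (X : Finset (Fin na)) (E : Finset (Fin nb)) (nx ne : ℕ)
    (hX : X.card = nx) (hE : E.card = ne)
    (l : ℝ) (hl : 0 < l)
    (hD : ∀ v : ↥X ⊕ ↥E → ℂ,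
      l * e2norm v ≤ e2norm ((Matrix.fromCols (subCols A X) (subCols B E)).mulVec v))
    (hlt : max (Real.sqrt (μa ^ 2 * nx + μm ^ 2 * ne))
        (Real.sqrt (μm ^ 2 * nx + μb ^ 2 * ne)) < l) :
    (∀ γ : Fin na, γ ∉ X →
      ¬ ∃ v : ↥X ⊕ ↥E → ℂ,
          (Matrix.fromCols (subCols A X) (subCols B E)).mulVec v = (fun i => A i γ)) ∧
    (∀ γ : Fin nb, γ ∉ E →
      ¬ ∃ v : ↥X ⊕ ↥E → ℂ,
          (Matrix.fromCols (subCols A X) (subCols B E)).mulVec v = (fun i => B i γ)) := by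
  set D := Matrix.fromCols (subCols A X) (subCols B E) with hDdef
  have cardX : Fintype.card ↥X = nx := by rw [Fintype.card_coe, hX]
  have cardE : Fintype.card ↥E = ne := by rw [Fintype.card_coe, hE]
  constructor
  · intro γ hγ
    refine aux_main D (fun i => A i γ) (μa ^ 2 * nx + μm ^ 2 * ne) l (hunitA γ) ?_ hl
      (lt_of_le_of_lt (le_max_left _ _) hlt) hD
    rw [Fintype.sum_sum_type]
    have h1 : ∀ x : ↥X,
        ‖∑ k, (starRingEnd ℂ) (A k γ) * D k (Sum.inl x)‖ ^ 2 ≤ μa ^ 2 := by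
      intro x
      have hne : γ ≠ (x : Fin na) := fun h => hγ (h ▸ x.2)
      have := hcohA γ (x : Fin na) hne
      simp only [hDdef, Matrix.fromCols_apply_inl, subCols, Matrix.submatrix_apply, id]
      exact pow_le_pow_left₀ (norm_nonneg _) this 2
    have h2 : ∀ x : ↥E,
        ‖∑ k, (starRingEnd ℂ) (A k γ) * D k (Sum.inr x)‖ ^ 2 ≤ μm ^ 2 := by
      intro x
      have := hmut γ (x : Fin nb)
      simp only [hDdef, Matrix.fromCols_apply_inr, subCols, Matrix.submatrix_apply, id]
      exact pow_le_pow_left₀ (norm_nonneg _) this 2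
    calc (∑ x : ↥X, ‖∑ k, (starRingEnd ℂ) (A k γ) * D k (Sum.inl x)‖ ^ 2)
          + ∑ x : ↥E, ‖∑ k, (starRingEnd ℂ) (A k γ) * D k (Sum.inr x)‖ ^ 2
        ≤ (∑ _x : ↥X, μa ^ 2) + ∑ _x : ↥E, μm ^ 2 := by
          exact add_le_add (Finset.sum_le_sum fun x _ => h1 x)
            (Finset.sum_le_sum fun x _ => h2 x)
      _ = μa ^ 2 * nx + μm ^ 2 * ne := by
          simp only [Finset.sum_const, Finset.card_univ, cardX, cardE, nsmul_eq_mul]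
          ring
  · intro γ hγ
    refine aux_main D (fun i => B i γ) (μm ^ 2 * nx + μb ^ 2 * ne) l (hunitB γ) ?_ hl
      (lt_of_le_of_lt (le_max_right _ _) hlt) hD
    rw [Fintype.sum_sum_type]
    have h1 : ∀ x : ↥X,
        ‖∑ k, (starRingEnd ℂ) (B k γ) * D k (Sum.inl x)‖ ^ 2 ≤ μm ^ 2 := by
      intro x
      have key : ‖∑ k, (starRingEnd ℂ) (B k γ) * A k (x : Fin na)‖ ≤ μm := by
        have hconj : (∑ k, (starRingEnd ℂ) (B k γ) * A k (x : Fin na)) =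
            (starRingEnd ℂ) (∑ k, (starRingEnd ℂ) (A k (x : Fin na)) * B k γ) := by
          rw [map_sum]
          congr 1; ext k
          simp [mul_comm]
        rw [hconj, Complex.norm_conj]
        exact hmut (x : Fin na) γ
      simp only [hDdef, Matrix.fromCols_apply_inl, subCols, Matrix.submatrix_apply, id]
      exact pow_le_pow_left₀ (norm_nonneg _) key 2
    have h2 : ∀ x : ↥E,
        ‖∑ k, (starRingEnd ℂ) (B k γ) * D k (Sum.inr x)‖ ^ 2 ≤ μb ^ 2 := by
      intro x
      have hne : γ ≠ (x : Fin nb) := fun h => hγ (h ▸ x.2)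
      have := hcohB γ (x : Fin nb) hne
      simp only [hDdef, Matrix.fromCols_apply_inr, subCols, Matrix.submatrix_apply, id]
      exact pow_le_pow_left₀ (norm_nonneg _) this 2
    calc (∑ x : ↥X, ‖∑ k, (starRingEnd ℂ) (B k γ) * D k (Sum.inl x)‖ ^ 2)
          + ∑ x : ↥E, ‖∑ k, (starRingEnd ℂ) (B k γ) * D k (Sum.inr x)‖ ^ 2
        ≤ (∑ _x : ↥X, μm ^ 2) + ∑ _x : ↥E, μb ^ 2 := by
          exact add_le_add (Finset.sum_le_sum fun x _ => h1 x)
            (Finset.sum_le_sum fun x _ => h2 x)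
      _ = μm ^ 2 * nx + μb ^ 2 * ne := by
          simp only [Finset.sum_const, Finset.card_univ, cardX, cardE, nsmul_eq_mul]
          ring
end

section
/- (Exact recovery condition for complex Basis Pursuit.) Let D ∈ ℂ^{m×n} with columns d_1,…,d_n, let s ∈ ℂ^n with support S = {j : s_j ≠ 0}, and let y = D s. Suppose the column submatrix D_S has full column rank and there exists a vector h ∈ ℂ^m such that ⟨d_j, h⟩ = sign(s_j) for all j ∈ S and |⟨h, d_γ⟩| < 1 for all γ ∉ S. Then s is the unique minimizer of the ℓ1-norm over the affine set {z ∈ ℂ^n : D z = y}; that is, every z ≠ s with D z = y satisfies ‖z‖₁ > ‖s‖₁. -/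
open scoped Matrix

/-- exact recovery condition for complex Basis Pursuit, Thm. 5 of
Tropp 2005: if `D_S` has full column rank (where `S = supp s`) and there is a dual
certificate `h` with `⟨d_j, h⟩ = sign(s_j)` on `S` and `|⟨h, d_γ⟩| < 1` off `S`, then `s` is
the unique ℓ1 minimizer subject to `D z = D s`. -/
theorem stmt17 {m n : ℕ} (D : Matrix (Fin m) (Fin n) ℂ) (s : Fin n → ℂ)
    (S : Finset (Fin n)) (hS : ∀ j, j ∈ S ↔ s j ≠ 0)
    (hfull : Function.Injective (subCols D S).mulVecLin)
    (h : Fin m → ℂ)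
    (hsign : ∀ j ∈ S, ∑ i, (starRingEnd ℂ) (D i j) * h i = s j / ((‖s j‖ : ℝ) : ℂ))
    (hdual : ∀ γ ∉ S, ‖∑ i, (starRingEnd ℂ) (h i) * D i γ‖ < 1) :
    ∀ z : Fin n → ℂ, D.mulVec z = D.mulVec s → z ≠ s →
      ∑ j, ‖s j‖ < ∑ j, ‖z j‖ := by
  classical
  intro z hz hne
  set c : Fin n → ℂ := fun j => ∑ i, (starRingEnd ℂ) (h i) * D i j with hc
  have hs0 : ∀ γ ∉ S, s γ = 0 := fun γ hγ => not_not.mp (fun h' => hγ ((hS γ).2 h'))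
  have hcS : ∀ j ∈ S, c j = (starRingEnd ℂ) (s j / ((‖s j‖ : ℝ) : ℂ)) := by
    intro j hj
    rw [← hsign j hj, map_sum]
    refine Finset.sum_congr rfl fun i _ => ?_
    rw [map_mul, Complex.conj_conj, mul_comm]
  have hcabs : ∀ j, ‖c j‖ ≤ 1 := by
    intro j
    by_cases hj : j ∈ S
    · have hs : s j ≠ 0 := (hS j).1 hj
      rw [hcS j hj, Complex.norm_conj, norm_div, Complex.norm_real,
        norm_norm, div_self (norm_ne_zero_iff.mpr hs)]
    · exact le_of_lt (hdual j hj)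
  have key : ∀ w : Fin n → ℂ,
      ∑ j, c j * w j = ∑ i, (starRingEnd ℂ) (h i) * D.mulVec w i := by
    intro w
    simp only [hc, Matrix.mulVec, dotProduct, Finset.sum_mul, Finset.mul_sum]
    rw [Finset.sum_comm]
    exact Finset.sum_congr rfl fun i _ => Finset.sum_congr rfl fun j _ => by ring
  have heq : ∑ j, c j * z j = ∑ j, c j * s j := by rw [key, key, hz]
  have hterm : ∀ j, c j * s j = ((‖s j‖ : ℝ) : ℂ) := by
    intro j
    by_cases hj : j ∈ S
    · have hsj : s j ≠ 0 := (hS j).1 hj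
      have habs : ((‖s j‖ : ℝ) : ℂ) ≠ 0 := by
        exact_mod_cast norm_ne_zero_iff.mpr hsj
      rw [hcS j hj, map_div₀, Complex.conj_ofReal]
      have h1 : (starRingEnd ℂ) (s j) * s j = ((‖s j‖ ^ 2 : ℝ) : ℂ) := by
        rw [mul_comm, Complex.mul_conj, Complex.sq_norm]
      calc (starRingEnd ℂ) (s j) / ((‖s j‖ : ℝ) : ℂ) * s j
          = (starRingEnd ℂ) (s j) * s j / ((‖s j‖ : ℝ) : ℂ) := by ring
        _ = ((‖s j‖ ^ 2 : ℝ) : ℂ) / ((‖s j‖ : ℝ) : ℂ) := by rw [h1]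
        _ = ((‖s j‖ : ℝ) : ℂ) := by
            push_cast
            rw [sq, mul_div_assoc, div_self habs, mul_one]
    · rw [hs0 j hj]; simp
  have hsum_s : ∑ j, c j * s j = ((∑ j, ‖s j‖ : ℝ) : ℂ) := by
    rw [Complex.ofReal_sum]
    exact Finset.sum_congr rfl fun j _ => hterm j
  have h1 : (∑ j, ‖s j‖) = ‖∑ j, c j * z j‖ := by
    rw [heq, hsum_s, Complex.norm_real, Real.norm_eq_abs,
      abs_of_nonneg (Finset.sum_nonneg fun j _ => norm_nonneg _)]
  have h2 : ‖∑ j, c j * z j‖ ≤ ∑ j, ‖c j‖ * ‖z j‖ := by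
    refine le_trans (norm_sum_le _ _) (le_of_eq ?_)
    exact Finset.sum_congr rfl fun j _ => norm_mul _ _
  by_cases hexist : ∃ γ ∉ S, z γ ≠ 0
  · obtain ⟨γ, hγS, hγz⟩ := hexist
    have h3 : ∑ j, ‖c j‖ * ‖z j‖ < ∑ j, ‖z j‖ := by
      refine Finset.sum_lt_sum (fun j _ => ?_) ⟨γ, Finset.mem_univ γ, ?_⟩
      · calc ‖c j‖ * ‖z j‖
            ≤ 1 * ‖z j‖ :=
              mul_le_mul_of_nonneg_right (hcabs j) (norm_nonneg _)
          _ = ‖z j‖ := one_mul _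
      · have hzpos : 0 < ‖z γ‖ := norm_pos_iff.mpr hγz
        calc ‖c γ‖ * ‖z γ‖
            < 1 * ‖z γ‖ :=
              mul_lt_mul_of_pos_right (hdual γ hγS) hzpos
          _ = ‖z γ‖ := one_mul _
    calc ∑ j, ‖s j‖ = ‖∑ j, c j * z j‖ := h1
      _ ≤ ∑ j, ‖c j‖ * ‖z j‖ := h2
      _ < ∑ j, ‖z j‖ := h3
  · exfalso
    push_neg at hexist
    have hveq : ∀ w : Fin n → ℂ, (∀ γ ∉ S, w γ = 0) →
        (subCols D S).mulVecLin (fun j : ↥S => w j) = D.mulVec w := by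
      intro w hw
      funext i
      simp only [Matrix.mulVecLin_apply, Matrix.mulVec, dotProduct, subCols,
        Matrix.submatrix_apply, id]
      rw [Finset.sum_coe_sort S (fun j => D i j * w j)]
      exact Finset.sum_subset (Finset.subset_univ S)
        (fun x _ hx => by rw [hw x hx, mul_zero])
    have hinj := hfull (a₁ := fun j : ↥S => z j) (a₂ := fun j : ↥S => s j)
      (by rw [hveq z hexist, hveq s hs0, hz])
    apply hne
    funext j
    by_cases hj : j ∈ S
    · exact congrFun hinj ⟨j, hj⟩
    · rw [hexist j hj, hs0 j hj]
end

section
/- (Exact recovery condition for Basis Pursuit with known corruption support.) Let A ∈ ℂ^{m×n_a} with columns a_1,…,a_{n_a} and B ∈ ℂ^{m×n_b}. Let x ∈ ℂ^{n_a} have support X and e ∈ ℂ^{n_b} have support contained in a known set E ⊆ {1,…,n_b}, and let y = A x + B e. Suppose D_{X,E} = [A_X B_E] has full column rank and there exists h ∈ ℂ^m such that ⟨a_j, h⟩ = sign(x_j) for all j ∈ X, ⟨b_j, h⟩ = sign(e_j) for all j ∈ E with e_j ≠ 0 (and ⟨b_j, h⟩ arbitrary prescribed dual values for j ∈ E with e_j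 = 0, i.e., D_{X,E}* h = sign of the concatenated coefficient vector), and |⟨h, a_γ⟩| < 1 for all γ ∉ X. Then (x, e) is the unique minimizer of ‖x'‖₁ + ‖e'‖₁ over all pairs (x', e') with x' ∈ ℂ^{n_a}, e' ∈ ℂ^{n_b} supported in E, and A x' + B e' = y. -/
open scoped Matrix

lemma keylem (a c z : ℂ) (hc : c ≠ 0)
    (ha' : (starRingEnd ℂ) a = c / (‖c‖ : ℂ)) :
    ‖c‖ + (a * z).re ≤ ‖c + z‖ := by
  have habsc : (‖c‖ : ℂ) ≠ 0 := by simpa using hc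
  have ha : a = (starRingEnd ℂ) c / (‖c‖ : ℂ) := by
    have := congrArg (starRingEnd ℂ) ha'
    simpa [map_div₀, Complex.conj_ofReal] using this
  have habs : ‖a‖ = 1 := by
    rw [ha, norm_div, Complex.norm_conj]
    simp [div_self, hc]
  have hac : a * c = (‖c‖ : ℂ) := by
    rw [ha, div_mul_eq_mul_div, mul_comm, Complex.mul_conj, Complex.normSq_eq_norm_sq]
    push_cast
    rw [sq, mul_div_assoc, div_self habsc, mul_one]
  calc ‖c‖ + (a * z).re = (a * c + a * z).re := by
        rw [Complex.add_re, hac]; simp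
    _ = (a * (c + z)).re := by rw [mul_add]
    _ ≤ ‖a * (c + z)‖ := Complex.re_le_norm _
    _ = ‖c + z‖ := by rw [norm_mul, habs, one_mul]

/-- exact recovery condition for Basis Pursuit with known corruption
support: let `y = A x + B e` with `supp x = X` and `supp e ⊆ E`. If `D_{X,E} = [A_X B_E]`
has full column rank and there is a dual certificate `h` with `⟨a_j, h⟩ = sign(x_j)` on `X`,
`⟨b_j, h⟩ = sign(e_j)` on `E` where `e_j ≠ 0` (and `⟨b_j, h⟩` a prescribed sign value, i.e.
unimodular, on `E` where `e_j = 0`, so that `D_{X,E}* h` is the sign of the concatenated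
coefficient vector), and `|⟨h, a_γ⟩| < 1` for `γ ∉ X`, then `(x, e)` is the unique minimizer
of `‖x'‖₁ + ‖e'‖₁` over pairs with `e'` supported in `E` and `A x' + B e' = y`. -/
theorem stmt18 {m na nb : ℕ} (A : Matrix (Fin m) (Fin na) ℂ) (B : Matrix (Fin m) (Fin nb) ℂ)
    (x : Fin na → ℂ) (e : Fin nb → ℂ)
    (X : Finset (Fin na)) (hX : ∀ j, j ∈ X ↔ x j ≠ 0)
    (E : Finset (Fin nb)) (hE : ∀ j, e j ≠ 0 → j ∈ E)
    (hfull : Function.Injective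
      (Matrix.fromCols (subCols A X) (subCols B E)).mulVecLin)
    (h : Fin m → ℂ)
    (hsignx : ∀ j ∈ X, ∑ i, (starRingEnd ℂ) (A i j) * h i = x j / (‖x j‖ : ℂ))
    (hsigne : ∀ j ∈ E, e j ≠ 0 →
      ∑ i, (starRingEnd ℂ) (B i j) * h i = e j / (‖e j‖ : ℂ))
    (hsigne0 : ∀ j ∈ E, e j = 0 →
      ‖∑ i, (starRingEnd ℂ) (B i j) * h i‖ = 1)
    (hdual : ∀ γ ∉ X, ‖∑ i, (starRingEnd ℂ) (h i) * A i γ‖ < 1) :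
    ∀ (x' : Fin na → ℂ) (e' : Fin nb → ℂ), (∀ j, e' j ≠ 0 → j ∈ E) →
      A.mulVec x' + B.mulVec e' = A.mulVec x + B.mulVec e →
      (x', e') ≠ (x, e) →
      ∑ j, ‖x j‖ + ∑ j, ‖e j‖ <
        ∑ j, ‖x' j‖ + ∑ j, ‖e' j‖ := by
  classical
  intro x' e' hsupp heq hne
  set u : Fin na → ℂ := x' - x with hu
  set v : Fin nb → ℂ := e' - e with hv
  have hvE : ∀ j ∉ E, v j = 0 := by
    intro j hj
    have h1 : e' j = 0 := by by_contra hc; exact hj (hsupp j hc)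
    have h2 : e j = 0 := by by_contra hc; exact hj (hE j hc)
    simp [hv, h1, h2]
  have hAB : A.mulVec u + B.mulVec v = 0 := by
    have : A.mulVec u + B.mulVec v
        = (A.mulVec x' + B.mulVec e') - (A.mulVec x + B.mulVec e) := by
      rw [hu, hv, Matrix.mulVec_sub, Matrix.mulVec_sub]; abel
    rw [this, heq, sub_self]
  set α : Fin na → ℂ := fun j => ∑ i, (starRingEnd ℂ) (h i) * A i j with hαdef
  set β : Fin nb → ℂ := fun j => ∑ i, (starRingEnd ℂ) (h i) * B i j with hβdef
  have hswapA : ∑ j, α j * u j = ∑ i, (starRingEnd ℂ) (h i) * A.mulVec u i := by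
    simp only [hαdef, Matrix.mulVec, dotProduct, Finset.mul_sum, Finset.sum_mul]
    rw [Finset.sum_comm]
    simp [mul_assoc]
  have hswapB : ∑ j, β j * v j = ∑ i, (starRingEnd ℂ) (h i) * B.mulVec v i := by
    simp only [hβdef, Matrix.mulVec, dotProduct, Finset.mul_sum, Finset.sum_mul]
    rw [Finset.sum_comm]
    simp [mul_assoc]
  have hK : ∑ j, α j * u j + ∑ j, β j * v j = 0 := by
    rw [hswapA, hswapB, ← Finset.sum_add_distrib]
    have : ∀ i, (starRingEnd ℂ) (h i) * A.mulVec u i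
        + (starRingEnd ℂ) (h i) * B.mulVec v i
        = (starRingEnd ℂ) (h i) * ((A.mulVec u + B.mulVec v) i) := by
      intro i; simp [mul_add]
    simp only [this, hAB]
    simp
  have hα : ∀ j ∈ X, (starRingEnd ℂ) (α j) = x j / (‖x j‖ : ℂ) := by
    intro j hj
    rw [← hsignx j hj, hαdef]
    simp [map_sum, map_mul, mul_comm]
  have hβ : ∀ j, e j ≠ 0 → (starRingEnd ℂ) (β j) = e j / (‖e j‖ : ℂ) := by
    intro j hj
    rw [← hsigne j (hE j hj) hj, hβdef]
    simp [map_sum, map_mul, mul_comm]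
  have hβ0 : ∀ j ∈ E, e j = 0 → ‖β j‖ = 1 := by
    intro j hj hj0
    have := hsigne0 j hj hj0
    have hconj : (starRingEnd ℂ) (β j) = ∑ i, (starRingEnd ℂ) (B i j) * h i := by
      rw [hβdef]; simp [map_sum, map_mul, mul_comm]
    rw [← Complex.norm_conj, hconj, this]
  -- case split
  by_cases hcase : ∀ γ ∉ X, u γ = 0
  · -- kernel case: contradiction with hne
    exfalso
    have hW : (Matrix.fromCols (subCols A X) (subCols B E)).mulVecLin
        (Sum.elim (fun j : ↥X => u (j : Fin na)) (fun j : ↥E => v (j : Fin nb))) = 0 := by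
      rw [Matrix.mulVecLin_apply, Matrix.fromCols_mulVec_sumElim]
      have hA' : (subCols A X) *ᵥ (fun j : ↥X => u (j : Fin na)) = A *ᵥ u := by
        funext i
        simp only [Matrix.mulVec, dotProduct, subCols, Matrix.submatrix_apply, id]
        rw [Finset.sum_coe_sort X (fun j => A i j * u j)]
        exact Finset.sum_subset (Finset.subset_univ X)
          (fun j _ hj => by rw [hcase j hj, mul_zero])
      have hB' : (subCols B E) *ᵥ (fun j : ↥E => v (j : Fin nb)) = B *ᵥ v := by
        funext i
        simp only [Matrix.mulVec, dotProduct, subCols, Matrix.submatrix_apply, id]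
        rw [Finset.sum_coe_sort E (fun j => B i j * v j)]
        exact Finset.sum_subset (Finset.subset_univ E)
          (fun j _ hj => by rw [hvE j hj, mul_zero])
      rw [hA', hB', hAB]
    have hw0 : Sum.elim (fun j : ↥X => u (j : Fin na)) (fun j : ↥E => v (j : Fin nb))
        = (0 : (↥X ⊕ ↥E) → ℂ) := by
      apply hfull
      rw [hW, map_zero]
    have hu0 : u = 0 := by
      funext j
      by_cases hj : j ∈ X
      · exact congrFun hw0 (Sum.inl ⟨j, hj⟩)
      · exact hcase j hj
    have hv0 : v = 0 := by
      funext j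
      by_cases hj : j ∈ E
      · exact congrFun hw0 (Sum.inr ⟨j, hj⟩)
      · exact hvE j hj
    apply hne
    have hx' : x' = x := by rw [← sub_eq_zero]; exact hu0
    have he' : e' = e := by rw [← sub_eq_zero]; exact hv0
    rw [hx', he']
  · push_neg at hcase
    obtain ⟨γ₀, hγ₀X, hγ₀u⟩ := hcase
    -- bounds
    have hxbound : ∑ j ∈ X, ‖x j‖ + (∑ j ∈ X, α j * u j).re
        + ∑ j ∈ Xᶜ, ‖u j‖ ≤ ∑ j, ‖x' j‖ := by
      rw [← Finset.sum_add_sum_compl X (fun j => ‖x' j‖)]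
      have h1 : ∑ j ∈ X, ‖x j‖ + (∑ j ∈ X, α j * u j).re
          ≤ ∑ j ∈ X, ‖x' j‖ := by
        rw [Complex.re_sum, ← Finset.sum_add_distrib]
        apply Finset.sum_le_sum
        intro j hj
        have hx'j : x' j = x j + u j := by simp [hu]
        rw [hx'j]
        exact keylem (α j) (x j) (u j) ((hX j).1 hj) (hα j hj)
      have h2 : ∑ j ∈ Xᶜ, ‖u j‖ ≤ ∑ j ∈ Xᶜ, ‖x' j‖ := by
        apply le_of_eq
        apply Finset.sum_congr rfl
        intro j hj
        have : x j = 0 := by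
          by_contra hc
          exact (Finset.mem_compl.mp hj) ((hX j).2 hc)
        simp [hu, this]
      linarith
    have hebound : ∑ j ∈ E, ‖e j‖ + (∑ j ∈ E, β j * v j).re
        ≤ ∑ j, ‖e' j‖ := by
      have h0 : ∑ j ∈ E, ‖e' j‖ ≤ ∑ j, ‖e' j‖ :=
        Finset.sum_le_sum_of_subset_of_nonneg (Finset.subset_univ E)
          (fun j _ _ => norm_nonneg _)
      have h1 : ∑ j ∈ E, ‖e j‖ + (∑ j ∈ E, β j * v j).re
          ≤ ∑ j ∈ E, ‖e' j‖ := by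
        rw [Complex.re_sum, ← Finset.sum_add_distrib]
        apply Finset.sum_le_sum
        intro j hj
        have he'j : e' j = e j + v j := by simp [hv]
        rw [he'j]
        by_cases hej : e j = 0
        · have hb : (β j * v j).re ≤ ‖v j‖ := by
            calc (β j * v j).re ≤ ‖β j * v j‖ := Complex.re_le_norm _
              _ = ‖β j‖ * ‖v j‖ := norm_mul _ _
              _ = ‖v j‖ := by rw [hβ0 j hj hej, one_mul]
          simp only [hej, norm_zero, zero_add]
          exact hb
        · exact keylem (β j) (e j) (v j) hej (hβ j hej)
      linarith
    -- identity (3)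
    have hsum3 : (∑ j ∈ X, α j * u j).re + (∑ j ∈ E, β j * v j).re
        = -(∑ j ∈ Xᶜ, α j * u j).re := by
      have hvsum : ∑ j, β j * v j = ∑ j ∈ E, β j * v j := by
        symm
        apply Finset.sum_subset (Finset.subset_univ E)
        intro j _ hj
        rw [hvE j hj, mul_zero]
      have hsplit : ∑ j ∈ X, α j * u j + ∑ j ∈ Xᶜ, α j * u j = ∑ j, α j * u j :=
        Finset.sum_add_sum_compl X _
      have : ∑ j ∈ X, α j * u j + ∑ j ∈ E, β j * v j = -∑ j ∈ Xᶜ, α j * u j := by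
        rw [← hvsum]
        have := hK
        rw [← hsplit] at this
        linear_combination this
      calc (∑ j ∈ X, α j * u j).re + (∑ j ∈ E, β j * v j).re
          = ((∑ j ∈ X, α j * u j) + ∑ j ∈ E, β j * v j).re := by rw [Complex.add_re]
        _ = (-∑ j ∈ Xᶜ, α j * u j).re := by rw [this]
        _ = -(∑ j ∈ Xᶜ, α j * u j).re := by rw [Complex.neg_re]
    -- bound (4)
    have h4 : -(∑ j ∈ Xᶜ, α j * u j).re
        ≥ -∑ j ∈ Xᶜ, ‖α j‖ * ‖u j‖ := by
      have : (∑ j ∈ Xᶜ, α j * u j).re ≤ ∑ j ∈ Xᶜ, ‖α j‖ * ‖u j‖ := by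
        rw [Complex.re_sum]
        apply Finset.sum_le_sum
        intro j _
        calc (α j * u j).re ≤ ‖α j * u j‖ := Complex.re_le_norm _
          _ = ‖α j‖ * ‖u j‖ := norm_mul _ _
      linarith
    -- strict positivity (5)
    have h5 : 0 < ∑ j ∈ Xᶜ, ‖u j‖
        - ∑ j ∈ Xᶜ, ‖α j‖ * ‖u j‖ := by
      rw [← Finset.sum_sub_distrib]
      have hpos : ∀ j ∈ Xᶜ, 0 ≤ ‖u j‖ - ‖α j‖ * ‖u j‖ := by
        intro j hj
        have hαj : ‖α j‖ < 1 := hdual j (Finset.mem_compl.mp hj)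
        nlinarith [norm_nonneg (u j), norm_nonneg (α j)]
      apply Finset.sum_pos' hpos
      refine ⟨γ₀, Finset.mem_compl.mpr hγ₀X, ?_⟩
      have hαγ : ‖α γ₀‖ < 1 := hdual γ₀ hγ₀X
      have huγ : 0 < ‖u γ₀‖ := norm_pos_iff.mpr hγ₀u
      nlinarith
    -- x, e sums over support
    have hxsum : ∑ j, ‖x j‖ = ∑ j ∈ X, ‖x j‖ := by
      symm
      apply Finset.sum_subset (Finset.subset_univ X)
      intro j _ hj
      have : x j = 0 := by by_contra hc; exact hj ((hX j).2 hc)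
      simp [this]
    have hesum : ∑ j, ‖e j‖ = ∑ j ∈ E, ‖e j‖ := by
      symm
      apply Finset.sum_subset (Finset.subset_univ E)
      intro j _ hj
      have : e j = 0 := by by_contra hc; exact hj (hE j hc)
      simp [this]
    rw [hxsum, hesum]
    linarith
end
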